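/- Let N ∈ ℕ and let x_i = cos((2i+1)π/(2N+2)) for i = 0, 1, …, N be the Chebyshev–Gauss points. Then for all 0 ≤ j, k ≤ N: (π/(N+1)) Σ_{i=0}^{N} T_j(x_i) T_k(x_i) = c_k (π/2) δ_{jk}, where c_0 = 2 and c_k = 1 for k ≥ 1 and δ_{jk} is the Kronecker delta. -/

import Mathlib

open Real Polynomial

/-- The k-th Chebyshev polynomial of the first kind, as a real polynomial. -/
noncomputable def chebT (n : ℕ) : Polynomial ℝ := Polynomial.Chebyshev.T ℝ (n : ℤ)

/-- `c_0 = 2`, `c_k = 1` for `k ≥ 1`. -/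
noncomputable def cCoef (k : ℕ) : ℝ := if k = 0 then 2 else 1

private lemma tele (α : ℝ) : ∀ M : ℕ,
    ∑ i ∈ Finset.range M, (2 * Real.sin α * Real.cos ((2 * (i : ℝ) + 1) * α))
      = Real.sin (2 * (M : ℝ) * α) := by
  intro M
  induction M with
  | zero => simp
  | succ n ih =>
    rw [Finset.sum_range_succ, ih]
    have h : Real.sin (2 * ((n : ℝ) + 1) * α) - Real.sin (2 * (n : ℝ) * α)
        = 2 * Real.sin α * Real.cos ((2 * (n : ℝ) + 1) * α) := by
      rw [Real.sin_sub_sin]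
      ring_nf
    push_cast
    linarith

private lemma sum_cos_zero (N m : ℕ) (h1 : 1 ≤ m) (h2 : m ≤ 2 * N + 1) :
    ∑ i ∈ Finset.range (N + 1),
      Real.cos ((m : ℝ) * ((2 * (i : ℝ) + 1) * Real.pi / (2 * (N : ℝ) + 2))) = 0 := by
  set α := (m : ℝ) * Real.pi / (2 * (N : ℝ) + 2) with hα
  have hden : (2 * (N : ℝ) + 2) ≠ 0 := by positivity
  have harg : ∀ i : ℕ,
      (m : ℝ) * ((2 * (i : ℝ) + 1) * Real.pi / (2 * (N : ℝ) + 2)) = (2 * (i : ℝ) + 1) * α := by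
    intro i; rw [hα]; field_simp
  simp_rw [harg]
  have htop : 2 * ((N + 1 : ℕ) : ℝ) * α = (m : ℝ) * Real.pi := by
    rw [hα]; push_cast; field_simp
  have hsum := tele α (N + 1)
  rw [← Finset.mul_sum] at hsum
  rw [htop, Real.sin_nat_mul_pi] at hsum
  have hsin : Real.sin α ≠ 0 := by
    have h0 : 0 < α := by
      rw [hα]
      apply div_pos
      · have : (0:ℝ) < m := by exact_mod_cast h1
        positivity
      · positivity
    have h1' : α < Real.pi := by
      rw [hα, div_lt_iff₀ (by positivity)]
      have : (m : ℝ) < 2 * (N : ℝ) + 2 := by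
        have : (m : ℝ) ≤ 2 * (N : ℝ) + 1 := by exact_mod_cast h2
        linarith
      nlinarith [Real.pi_pos]
    exact ne_of_gt (Real.sin_pos_of_pos_of_lt_pi h0 h1')
  have h2s : (2 : ℝ) * Real.sin α ≠ 0 := by
    simp [hsin]
  exact (mul_eq_zero.mp hsum).resolve_left h2s

private lemma sum_cos_int (N : ℕ) (m : ℤ) (h0 : m ≠ 0) (h2 : m.natAbs ≤ 2 * N + 1) :
    ∑ i ∈ Finset.range (N + 1),
      Real.cos ((m : ℝ) * ((2 * (i : ℝ) + 1) * Real.pi / (2 * (N : ℝ) + 2))) = 0 := by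
  have h1 : 1 ≤ m.natAbs := Int.natAbs_pos.mpr h0
  have key := sum_cos_zero N m.natAbs h1 h2
  rcases Int.natAbs_eq m with h | h
  · have hm : (m : ℝ) = (m.natAbs : ℝ) := by
      rw [h]; simp [Int.natAbs_abs, Nat.cast_natAbs]
    rw [hm]; exact key
  · have hm : (m : ℝ) = -(m.natAbs : ℝ) := by
      rw [h]; simp [Int.natAbs_abs, Nat.cast_natAbs]
    simp_rw [hm, neg_mul, Real.cos_neg]
    exact key

/-- Discrete orthogonality of the Chebyshev polynomials at the Chebyshev–Gauss
points `x_i = cos((2i+1)π/(2N+2))` with the uniform weights `π/(N+1)`: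
for all `0 ≤ j, k ≤ N`,
`(π/(N+1)) Σ_{i=0}^{N} T_j(x_i) T_k(x_i) = c_k (π/2) δ_{jk}`. -/
theorem chebyshev_gauss_discrete_orthogonality (N : ℕ) :
    ∀ j k : ℕ, j ≤ N → k ≤ N →
      (Real.pi / ((N : ℝ) + 1)) *
        ∑ i ∈ Finset.range (N + 1),
          (chebT j).eval (Real.cos ((2 * (i : ℝ) + 1) * Real.pi / (2 * (N : ℝ) + 2))) *
            (chebT k).eval (Real.cos ((2 * (i : ℝ) + 1) * Real.pi / (2 * (N : ℝ) + 2))) =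
      cCoef k * (Real.pi / 2) * (if j = k then 1 else 0) := by
  intro j k hj hk
  have heval : ∀ (n : ℕ) (t : ℝ), (chebT n).eval (Real.cos t) = Real.cos ((n : ℝ) * t) := by
    intro n t
    rw [chebT, Polynomial.Chebyshev.T_real_cos]
    norm_num
  have hprod : ∀ a b : ℝ,
      Real.cos a * Real.cos b = (Real.cos (a - b) + Real.cos (a + b)) / 2 := by
    intro a b; rw [Real.cos_sub, Real.cos_add]; ring
  simp_rw [heval, hprod, ← sub_mul, ← add_mul]
  have hsplit :
      ∑ i ∈ Finset.range (N + 1),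
        ((Real.cos (((j : ℝ) - k) * ((2 * (i : ℝ) + 1) * Real.pi / (2 * (N : ℝ) + 2))) +
          Real.cos (((j : ℝ) + k) * ((2 * (i : ℝ) + 1) * Real.pi / (2 * (N : ℝ) + 2)))) / 2)
      = ((∑ i ∈ Finset.range (N + 1),
            Real.cos (((j : ℝ) - k) * ((2 * (i : ℝ) + 1) * Real.pi / (2 * (N : ℝ) + 2)))) +
         (∑ i ∈ Finset.range (N + 1),
            Real.cos (((j : ℝ) + k) * ((2 * (i : ℝ) + 1) * Real.pi / (2 * (N : ℝ) + 2))))) / 2 := by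
    rw [← Finset.sum_add_distrib, Finset.sum_div]
  rw [hsplit]
  have hN1 : ((N : ℝ) + 1) ≠ 0 := by positivity
  by_cases hjk : j = k
  · subst hjk
    have hsub : ∑ i ∈ Finset.range (N + 1),
        Real.cos (((j : ℝ) - j) * ((2 * (i : ℝ) + 1) * Real.pi / (2 * (N : ℝ) + 2)))
        = (N : ℝ) + 1 := by
      simp [sub_self]
    rw [hsub]
    by_cases hj0 : j = 0
    · subst hj0
      have h00 : ∑ i ∈ Finset.range (N + 1),
          Real.cos ((((0 : ℕ) : ℝ) + ((0 : ℕ) : ℝ)) * ((2 * (i : ℝ) + 1) * Real.pi / (2 * (N : ℝ) + 2)))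
          = (N : ℝ) + 1 := by norm_num
      rw [h00]
      simp only [cCoef, if_pos rfl]
      field_simp
      norm_num
    · have hadd : ∑ i ∈ Finset.range (N + 1),
          Real.cos (((j : ℝ) + j) * ((2 * (i : ℝ) + 1) * Real.pi / (2 * (N : ℝ) + 2))) = 0 := by
        have := sum_cos_int N ((j : ℤ) + j) (by omega)
          (by rw [Int.natAbs_add_of_nonneg (by positivity) (by positivity)]; simp; omega)
        rw [← this]
        apply Finset.sum_congr rfl
        intro i _
        congr 2
        push_cast; ring
      rw [hadd]
      simp only [cCoef, if_neg hj0, if_pos rfl]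
      field_simp
      norm_num
  · have hsub : ∑ i ∈ Finset.range (N + 1),
        Real.cos (((j : ℝ) - k) * ((2 * (i : ℝ) + 1) * Real.pi / (2 * (N : ℝ) + 2))) = 0 := by
      have := sum_cos_int N ((j : ℤ) - k) (by omega) (by omega)
      rw [← this]
      apply Finset.sum_congr rfl
      intro i _
      congr 2
      push_cast; ring
    have hadd : ∑ i ∈ Finset.range (N + 1),
        Real.cos (((j : ℝ) + k) * ((2 * (i : ℝ) + 1) * Real.pi / (2 * (N : ℝ) + 2))) = 0 := by
      have := sum_cos_int N ((j : ℤ) + k) (by omega)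
        (by rw [Int.natAbs_add_of_nonneg (by positivity) (by positivity)]; simp; omega)
      rw [← this]
      apply Finset.sum_congr rfl
      intro i _
      congr 2
      push_cast; ring
    rw [hsub, hadd]
    simp [hjk]
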